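/- Let R_0 be a noetherian ring and let R = R_0[ξ_1, …, ξ_r] be a finitely generated ℤ-graded R_0-algebra in which each generator ξ_j has positive degree. Let m = R_+ denote the irrelevant ideal (the ideal generated by all elements of positive degree) and let R̂^m denote the m-adic completion of R. If ℘ is a graded prime ideal of R, then the extension ℘·R̂^m is a prime ideal of R̂^m. -/

import Mathlib

open DirectSum

/-! ### Auxiliary natural number division lemmas -/

private theorem nu_ge (D j : ℕ) (hD : 0 < D) : j ≤ (j + D - 1) / D * D := by
  rw [mul_comm]
  have h1 := Nat.div_add_mod (j + D - 1) D
  have h2 := Nat.mod_lt (j + D - 1) hD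
  omega

private theorem nu_le (D j m : ℕ) (hD : 0 < D) (h : j ≤ m * D) : (j + D - 1) / D ≤ m := by
  have h0 : j + D - 1 ≤ D - 1 + m * D := by omega
  calc (j + D - 1) / D ≤ (D - 1 + m * D) / D := Nat.div_le_div_right h0
    _ = (D - 1) / D + m := Nat.add_mul_div_right _ _ hD
    _ = m := by rw [Nat.div_eq_of_lt (by omega), zero_add]

private theorem nu_lower (D j k : ℕ) (hD : 0 < D) (h : k * D ≤ j) : k ≤ (j + D - 1) / D :=
  ((Nat.le_div_iff_mul_le hD).mpr h).trans (Nat.div_le_div_right (by omega))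

private theorem nu_superadd (D i l : ℕ) (hD : 0 < D) :
    (i + l + D - 1) / D ≤ (i + D - 1) / D + (l + D - 1) / D := by
  refine nu_le D _ _ hD ?_
  have h1 := nu_ge D i hD
  have h2 := nu_ge D l hD
  have h3 : ((i + D - 1) / D + (l + D - 1) / D) * D
      = (i + D - 1) / D * D + (l + D - 1) / D * D := add_mul _ _ _
  omega

/-! ### Graded ring lemmas -/

section Graded

variable {A : Type} [CommRing A] (𝒜 : ℕ → AddSubgroup A) [GradedRing 𝒜]

/-- The ideal of elements whose homogeneous components in degrees `< k` vanish. -/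
private def lowZero (k : ℕ) : Ideal A where
  carrier := { a | ∀ j < k, (DirectSum.decompose 𝒜 a j : A) = 0 }
  zero_mem' := fun j _ => by simp
  add_mem' := fun {a b} ha hb j hj => by
    rw [DirectSum.decompose_add, DirectSum.add_apply, AddSubgroup.coe_add, ha j hj, hb j hj,
      add_zero]
  smul_mem' := fun c a ha => by
    intro j hj
    classical
    rw [smul_eq_mul, DirectSum.decompose_mul, DirectSum.coe_mul_apply]
    refine Finset.sum_eq_zero fun ij hij => ?_
    obtain ⟨-, hsum⟩ := Finset.mem_filter.mp hij
    rw [ha ij.2 (by omega), mul_zero]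

private theorem mem_lowZero_iff {k : ℕ} {a : A} :
    a ∈ lowZero 𝒜 k ↔ ∀ j < k, (DirectSum.decompose 𝒜 a j : A) = 0 := Iff.rfl

private theorem lowZero_mul_le (k l : ℕ) :
    lowZero 𝒜 k * lowZero 𝒜 l ≤ lowZero 𝒜 (k + l) := by
  rw [Ideal.mul_le]
  intro a ha b hb
  intro j hj
  classical
  rw [DirectSum.decompose_mul, DirectSum.coe_mul_apply]
  refine Finset.sum_eq_zero fun ij hij => ?_
  obtain ⟨-, hsum⟩ := Finset.mem_filter.mp hij
  by_cases hc : ij.1 < k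
  · rw [ha ij.1 hc, zero_mul]
  · rw [hb ij.2 (by omega), mul_zero]

private theorem mem_irrelevant_iff' (a : A) :
    a ∈ (HomogeneousIdeal.irrelevant 𝒜).toIdeal ↔ (DirectSum.decompose 𝒜 a 0 : A) = 0 :=
  Iff.rfl

private theorem pow_irrelevant_le_lowZero (k : ℕ) :
    (HomogeneousIdeal.irrelevant 𝒜).toIdeal ^ k ≤ lowZero 𝒜 k := by
  induction k with
  | zero => intro a _ j hj; omega
  | succ k ih =>
    have h1 : (HomogeneousIdeal.irrelevant 𝒜).toIdeal ≤ lowZero 𝒜 1 := by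
      intro a ha j hj
      interval_cases j
      exact (mem_irrelevant_iff' 𝒜 a).mp ha
    calc (HomogeneousIdeal.irrelevant 𝒜).toIdeal ^ (k + 1)
        = (HomogeneousIdeal.irrelevant 𝒜).toIdeal ^ k *
          (HomogeneousIdeal.irrelevant 𝒜).toIdeal := pow_succ _ _
      _ ≤ lowZero 𝒜 k * lowZero 𝒜 1 := Ideal.mul_mono ih h1
      _ ≤ lowZero 𝒜 (k + 1) := lowZero_mul_le 𝒜 k 1

/-- Every homogeneous component of degree `j` lies in the `⌈j/D⌉`-th power of the
irrelevant ideal, where `D` bounds the degrees of the algebra generators. -/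
private theorem decompose_mem_pow (D : ℕ) (hD : 0 < D) (r : ℕ) (ξ : Fin r → A) (d : Fin r → ℕ)
    (hd : ∀ t, 0 < d t ∧ d t ≤ D ∧ ξ t ∈ 𝒜 (d t))
    (hcl : Subring.closure ((𝒜 0 : Set A) ∪ Set.range ξ) = ⊤) (a : A) (j : ℕ) :
    (DirectSum.decompose 𝒜 a j : A) ∈
      (HomogeneousIdeal.irrelevant 𝒜).toIdeal ^ ((j + D - 1) / D) := by
  classical
  set I : Ideal A := (HomogeneousIdeal.irrelevant 𝒜).toIdeal with hI
  let S : Subring A :=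
    { carrier := { a : A | ∀ j : ℕ, (DirectSum.decompose 𝒜 a j : A) ∈ I ^ ((j + D - 1) / D) }
      zero_mem' := fun j => by simp
      one_mem' := by
        intro j
        rcases Nat.eq_zero_or_pos j with rfl | hj
        · have : (0 + D - 1) / D = 0 := Nat.div_eq_of_lt (by omega)
          rw [this, pow_zero, Ideal.one_eq_top]
          exact Submodule.mem_top
        · rw [DirectSum.decompose_of_mem_ne 𝒜 (SetLike.one_mem_graded 𝒜) (by omega)]
          exact zero_mem _
      add_mem' := fun {a b} ha hb j => by
        rw [DirectSum.decompose_add, DirectSum.add_apply, AddSubgroup.coe_add]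
        exact add_mem (ha j) (hb j)
      neg_mem' := fun {a} ha j => by
        rw [DirectSum.decompose_neg, DFinsupp.neg_apply, AddSubgroup.coe_neg]
        exact neg_mem (ha j)
      mul_mem' := fun {a b} ha hb => by
        intro j
        rw [DirectSum.decompose_mul, DirectSum.coe_mul_apply]
        refine Submodule.sum_mem _ fun ij hij => ?_
        obtain ⟨-, hsum⟩ := Finset.mem_filter.mp hij
        have h1 : (DirectSum.decompose 𝒜 a ij.1 : A) * (DirectSum.decompose 𝒜 b ij.2 : A) ∈
            I ^ ((ij.1 + D - 1) / D) * I ^ ((ij.2 + D - 1) / D) :=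
          Ideal.mul_mem_mul (ha ij.1) (hb ij.2)
        rw [← pow_add] at h1
        refine Ideal.pow_le_pow_right ?_ h1
        subst hsum
        exact nu_superadd D ij.1 ij.2 hD }
  have hle : Subring.closure ((𝒜 0 : Set A) ∪ Set.range ξ) ≤ S := by
    rw [Subring.closure_le]
    rintro x (hx | ⟨t, rfl⟩)
    · intro j
      rcases Nat.eq_zero_or_pos j with rfl | hj
      · have : (0 + D - 1) / D = 0 := Nat.div_eq_of_lt (by omega)
        rw [this, pow_zero, Ideal.one_eq_top]
        exact Submodule.mem_top
      · rw [DirectSum.decompose_of_mem_ne 𝒜 hx (by omega)]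
        exact zero_mem _
    · intro j
      obtain ⟨hd1, hd2, hd3⟩ := hd t
      rcases eq_or_ne j (d t) with heq | hne
      · rw [heq, DirectSum.decompose_of_mem_same 𝒜 hd3]
        have hmem : ξ t ∈ I ^ 1 := by
          rw [pow_one, hI, mem_irrelevant_iff' 𝒜]
          exact DirectSum.decompose_of_mem_ne 𝒜 hd3 (by omega)
        exact Ideal.pow_le_pow_right (nu_le D (d t) 1 hD (by omega)) hmem
      · rw [DirectSum.decompose_of_mem_ne 𝒜 hd3 (Ne.symm hne)]
        exact zero_mem _
  have htop : S = ⊤ := top_le_iff.mp (hcl ▸ hle)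
  have : a ∈ S := htop ▸ Subring.mem_top a
  exact this j

end Graded

/-- Let `R₀` be a noetherian ring and `R = R₀[ξ₁, …, ξ_r]` a finitely
generated graded `R₀`-algebra whose generators `ξ_j` are homogeneous of positive degree.
Let `m = R₊` be the irrelevant ideal and `R̂^m` the `m`-adic completion of `R`.  If `℘` is
a graded prime ideal of `R`, then `℘·R̂^m` is a prime ideal of `R̂^m`. -/
theorem stmt_10 (A : Type) [CommRing A] [IsNoetherianRing A] (𝒜 : ℕ → AddSubgroup A)
    [GradedRing 𝒜] (h0 : IsNoetherianRing (𝒜 0))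
    (hfg : ∃ (r : ℕ) (ξ : Fin r → A) (d : Fin r → ℕ),
      (∀ j, 0 < d j ∧ ξ j ∈ 𝒜 (d j)) ∧
        Subring.closure ((𝒜 0 : Set A) ∪ Set.range ξ) = ⊤)
    (p : Ideal A) (hp : p.IsPrime) (hph : Ideal.IsHomogeneous 𝒜 p) :
    (p.map (algebraMap A
      (AdicCompletion (HomogeneousIdeal.irrelevant 𝒜).toIdeal A))).IsPrime := by
  classical
  obtain ⟨r, ξ, d, hdg, hcl⟩ := hfg
  set I : Ideal A := (HomogeneousIdeal.irrelevant 𝒜).toIdeal with hI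
  set D : ℕ := max (Finset.univ.sup d) 1 with hDdef
  have hD0 : 0 < D := lt_of_lt_of_le one_pos (le_max_right _ _)
  have hdD : ∀ t, 0 < d t ∧ d t ≤ D ∧ ξ t ∈ 𝒜 (d t) := fun t =>
    ⟨(hdg t).1, le_trans (Finset.le_sup (Finset.mem_univ t)) (le_max_left _ _), (hdg t).2⟩
  have hdec : ∀ (a : A) (j : ℕ), (DirectSum.decompose 𝒜 a j : A) ∈ I ^ ((j + D - 1) / D) :=
    decompose_mem_pow 𝒜 D hD0 r ξ d hdD hcl
  have hsm : ∀ k : ℕ, (I ^ k • ⊤ : Ideal A) = I ^ k := fun k => by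
    rw [smul_eq_mul, Ideal.mul_top]
  -- The candidate ideal `K` of the completion.
  let K : Ideal (AdicCompletion I A) :=
    { carrier := { x | ∀ n : ℕ, x.val n ∈ p.map (Ideal.Quotient.mk (I ^ n • ⊤ : Ideal A)) }
      zero_mem' := fun n => by rw [AdicCompletion.val_zero]; exact zero_mem _
      add_mem' := fun {x y} hx hy n => by
        rw [AdicCompletion.val_add]; exact add_mem (hx n) (hy n)
      smul_mem' := fun c x hx => by
        intro n
        have hcx : c • x = c * x := rfl
        rw [hcx, AdicCompletion.val_mul]
        exact Ideal.mul_mem_left _ _ (hx n) }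
  have memK : ∀ x : AdicCompletion I A,
      x ∈ K ↔ ∀ n : ℕ, x.val n ∈ p.map (Ideal.Quotient.mk (I ^ n • ⊤ : Ideal A)) :=
    fun x => Iff.rfl
  -- membership for Cauchy sequences
  have memmk : ∀ (h : AdicCompletion.AdicCauchySequence I A) (n : ℕ),
      ((AdicCompletion.mk I A h).val n ∈ p.map (Ideal.Quotient.mk (I ^ n • ⊤ : Ideal A)))
        ↔ h.val n ∈ p ⊔ (I ^ n • ⊤ : Ideal A) := by
    intro h n
    have : (AdicCompletion.mk I A h).val n
        = Ideal.Quotient.mk (I ^ n • ⊤ : Ideal A) (h.val n) := rfl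
    rw [this, Ideal.mem_quotient_iff_mem_sup]
  -- Step 1 : `p.map (algebraMap A _) = K`
  have hmap : p.map (algebraMap A (AdicCompletion I A)) = K := by
    apply le_antisymm
    · rw [Ideal.map_le_iff_le_comap]
      intro q hq
      intro n
      have : (algebraMap A (AdicCompletion I A) q).val n
          = Ideal.Quotient.mk (I ^ n • ⊤ : Ideal A) q := rfl
      rw [this]
      exact Ideal.mem_map_of_mem _ hq
    · intro x hx
      -- `x` is killed by the map to the completion of `A ⧸ p`.
      have h0 : AdicCompletion.map I (p.mkQ) x = 0 := by
        ext n
        obtain ⟨a, ha⟩ := Submodule.Quotient.mk_surjective _ (x.val n)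
        rw [AdicCompletion.map_val_apply, ← ha, LinearMap.reduceModIdeal_apply,
          AdicCompletion.val_zero, Pi.zero_apply, Submodule.Quotient.mk_eq_zero]
        have hxa : a ∈ p ⊔ (I ^ n • ⊤ : Ideal A) := by
          rw [← Ideal.mem_quotient_iff_mem_sup]
          have ha' : Ideal.Quotient.mk (I ^ n • ⊤ : Ideal A) a = x.val n := ha
          rw [ha']
          exact hx n
        obtain ⟨q, hq, i, hi, hqi⟩ := Submodule.mem_sup.mp hxa
        have h1 : p.mkQ q = 0 := (Submodule.Quotient.mk_eq_zero p).mpr hq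
        have h2 : p.mkQ i ∈ (I ^ n • ⊤ : Submodule A (A ⧸ p)) := by
          have hmap2 : Submodule.map p.mkQ (I ^ n • ⊤ : Submodule A A)
              = (I ^ n • ⊤ : Submodule A (A ⧸ p)) := by
            rw [Submodule.map_smul'', Submodule.map_top, Submodule.range_mkQ]
          rw [← hmap2]
          exact ⟨i, hi, rfl⟩
        rw [← hqi, map_add, h1, zero_add]
        exact h2
      have hex := AdicCompletion.map_exact (I := I) (Submodule.injective_subtype p)
        (LinearMap.exact_subtype_mkQ p) (Submodule.mkQ_surjective p)
      obtain ⟨z, hz⟩ := (hex x).mp h0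
      obtain ⟨t, ht⟩ := AdicCompletion.ofTensorProduct_surjective_of_finite I (↥p) z
      rw [← hz, ← ht]
      clear hz ht hx h0
      induction t with
      | zero => rw [map_zero, map_zero]; exact zero_mem _
      | tmul c q =>
        rw [AdicCompletion.ofTensorProduct_tmul, map_smul]
        have hof : AdicCompletion.map I (Submodule.subtype p) (AdicCompletion.of I (↥p) q)
            = algebraMap A (AdicCompletion I A) (q : A) := by
          ext n; rfl
        rw [hof]
        have : c • algebraMap A (AdicCompletion I A) (q : A)
            = c * algebraMap A (AdicCompletion I A) (q : A) := rfl
        rw [this]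
        exact Ideal.mul_mem_left _ _ (Ideal.mem_map_of_mem _ q.2)
      | add u v hu hv => rw [map_add, map_add]; exact add_mem hu hv
  rw [hmap]
  -- Step 2 : `K` is prime.
  -- stability of homogeneous components of Cauchy sequences
  have hstab : ∀ (h : AdicCompletion.AdicCauchySequence I A) (j N : ℕ), j < N →
      (DirectSum.decompose 𝒜 (h.val N) j : A)
        = (DirectSum.decompose 𝒜 (h.val (j + 1)) j : A) := by
    intro h j N hjN
    have hc := h.property (show j + 1 ≤ N by omega)
    rw [SModEq.sub_mem] at hc
    have hc' : h.val (j + 1) - h.val N ∈ I ^ (j + 1) := by rw [← hsm (j + 1)]; exact hc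
    have hz : (DirectSum.decompose 𝒜 (h.val (j + 1) - h.val N) j : A) = 0 :=
      pow_irrelevant_le_lowZero 𝒜 (j + 1) hc' j (by omega)
    rw [DirectSum.decompose_sub, DirectSum.sub_apply, AddSubgroup.coe_sub, sub_eq_zero] at hz
    exact hz.symm
  -- existence of a nonvanishing leading coefficient mod `p`
  have hexists : ∀ (h : AdicCompletion.AdicCauchySequence I A) (n : ℕ),
      h.val n ∉ p ⊔ (I ^ n • ⊤ : Ideal A) →
      ∃ j, (DirectSum.decompose 𝒜 (h.val (j + 1)) j : A) ∉ p := by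
    intro h n hn
    by_contra hall
    push_neg at hall
    apply hn
    have hN : n ≤ n * D + n := Nat.le_add_left n (n * D)
    have h1 : h.val (n * D + n) ∈ p ⊔ (I ^ n • ⊤ : Ideal A) := by
      rw [← DirectSum.sum_support_decompose 𝒜 (h.val (n * D + n))]
      refine Submodule.sum_mem _ fun j _ => ?_
      by_cases hcase : j < n * D
      · refine Submodule.mem_sup_left ?_
        rw [hstab h j (n * D + n) (by omega)]
        exact hall j
      · refine Submodule.mem_sup_right ?_
        rw [hsm]
        exact Ideal.pow_le_pow_right (nu_lower D j n hD0 (by omega)) (hdec _ j)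
    have h2 := h.property hN
    rw [SModEq.sub_mem] at h2
    have h3 : h.val n = (h.val n - h.val (n * D + n)) + h.val (n * D + n) := by ring
    rw [h3]
    exact Submodule.add_mem _ (Submodule.mem_sup_right h2) h1
  constructor
  · -- K ≠ ⊤
    intro htop
    have h1 : (1 : AdicCompletion I A) ∈ K := htop ▸ Submodule.mem_top
    have h2 := (memmk 1 1).mp ((memK 1).mp h1 1)
    obtain ⟨q, hq, i, hi, hqi⟩ := Submodule.mem_sup.mp h2
    have hi' : (DirectSum.decompose 𝒜 i 0 : A) = 0 := by
      have hi2 : i ∈ I ^ 1 := by rw [← hsm 1]; exact hi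
      exact pow_irrelevant_le_lowZero 𝒜 1 hi2 0 (by omega)
    have hone : ((1 : AdicCompletion.AdicCauchySequence I A) : ℕ → A) 1 = (1 : A) := rfl
    have h1A : (1 : A) ∈ p := by
      have hd1 : (DirectSum.decompose 𝒜 (q + i) 0 : A) = 1 := by
        rw [hqi, hone, DirectSum.decompose_of_mem_same 𝒜 (SetLike.one_mem_graded 𝒜)]
      rw [DirectSum.decompose_add, DirectSum.add_apply, AddSubgroup.coe_add, hi',
        add_zero] at hd1
      rw [← hd1]
      exact hph 0 hq
    exact hp.ne_top (Ideal.eq_top_iff_one p |>.mpr h1A)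
  · -- primality
    intro x y hxy
    by_contra hcon
    push_neg at hcon
    obtain ⟨hx, hy⟩ := hcon
    obtain ⟨f, rfl⟩ := AdicCompletion.mk_surjective I A x
    obtain ⟨g, rfl⟩ := AdicCompletion.mk_surjective I A y
    -- extract indices where `f`, `g` fail to be in the extended ideal
    rw [memK, not_forall] at hx hy
    obtain ⟨n, hn⟩ := hx
    obtain ⟨m, hm⟩ := hy
    rw [memmk] at hn hm
    have hfex := hexists f n hn
    have hgex := hexists g m hm
    set j₀ := Nat.find hfex with hj₀def
    set j₁ := Nat.find hgex with hj₁def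
    have hj₀ : (DirectSum.decompose 𝒜 (f.val (j₀ + 1)) j₀ : A) ∉ p := Nat.find_spec hfex
    have hj₁ : (DirectSum.decompose 𝒜 (g.val (j₁ + 1)) j₁ : A) ∉ p := Nat.find_spec hgex
    have hj₀min : ∀ j < j₀, (DirectSum.decompose 𝒜 (f.val (j + 1)) j : A) ∈ p :=
      fun j hj => not_not.mp (Nat.find_min hfex hj)
    have hj₁min : ∀ j < j₁, (DirectSum.decompose 𝒜 (g.val (j + 1)) j : A) ∈ p :=
      fun j hj => not_not.mp (Nat.find_min hgex hj)
    set M : ℕ := j₀ + j₁ + 1 with hMdef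
    have hKM := (memK _).mp hxy M
    have hvalmul : (AdicCompletion.mk I A f * AdicCompletion.mk I A g).val M
        = Ideal.Quotient.mk (I ^ M • ⊤ : Ideal A) (f.val M * g.val M) := by
      rw [AdicCompletion.val_mul, map_mul]
      rfl
    rw [hvalmul, Ideal.mem_quotient_iff_mem_sup] at hKM
    obtain ⟨q, hq, i, hi, hqi⟩ := Submodule.mem_sup.mp hKM
    -- the `(j₀ + j₁)`-component of the product lies in `p`
    have hip : (DirectSum.decompose 𝒜 (f.val M * g.val M) (j₀ + j₁) : A) ∈ p := by
      have hi0 : (DirectSum.decompose 𝒜 i (j₀ + j₁) : A) = 0 := by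
        have hi2 : i ∈ I ^ M := by rw [← hsm M]; exact hi
        exact pow_irrelevant_le_lowZero 𝒜 M hi2 (j₀ + j₁) (by omega)
      rw [← hqi, DirectSum.decompose_add, DirectSum.add_apply, AddSubgroup.coe_add, hi0,
        add_zero]
      exact hph _ hq
    rw [DirectSum.decompose_mul, DirectSum.coe_mul_apply] at hip
    -- the leading term is the only one possibly outside `p`
    have hj₀ne : (DirectSum.decompose 𝒜 (f.val M) j₀ : A) ∉ p := by
      rw [hstab f j₀ M (by omega)]; exact hj₀
    have hj₁ne : (DirectSum.decompose 𝒜 (g.val M) j₁ : A) ∉ p := by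
      rw [hstab g j₁ M (by omega)]; exact hj₁
    have hmemS : (j₀, j₁) ∈ ((DirectSum.decompose 𝒜 (f.val M)).support ×ˢ
        (DirectSum.decompose 𝒜 (g.val M)).support).filter
          (fun ij : ℕ × ℕ => ij.1 + ij.2 = j₀ + j₁) := by
      rw [Finset.mem_filter, Finset.mem_product]
      refine ⟨⟨?_, ?_⟩, rfl⟩
      · rw [DFinsupp.mem_support_iff]
        intro hzero
        apply hj₀ne
        rw [hzero, ZeroMemClass.coe_zero]
        exact zero_mem p
      · rw [DFinsupp.mem_support_iff]
        intro hzero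
        apply hj₁ne
        rw [hzero, ZeroMemClass.coe_zero]
        exact zero_mem p
    have hsum := Finset.add_sum_erase _
      (fun ij : ℕ × ℕ => (DirectSum.decompose 𝒜 (f.val M) ij.1 : A) *
        (DirectSum.decompose 𝒜 (g.val M) ij.2 : A)) hmemS
    have hrest : ∑ ij ∈ (((DirectSum.decompose 𝒜 (f.val M)).support ×ˢ
        (DirectSum.decompose 𝒜 (g.val M)).support).filter
          (fun ij : ℕ × ℕ => ij.1 + ij.2 = j₀ + j₁)).erase (j₀, j₁),
        (DirectSum.decompose 𝒜 (f.val M) ij.1 : A) *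
          (DirectSum.decompose 𝒜 (g.val M) ij.2 : A) ∈ p := by
      refine Submodule.sum_mem _ fun ij hij => ?_
      obtain ⟨hne, hijS⟩ := Finset.mem_erase.mp hij
      obtain ⟨-, hsum'⟩ := Finset.mem_filter.mp hijS
      rcases lt_or_ge ij.1 j₀ with hlt | hge
      · refine Ideal.mul_mem_right _ _ ?_
        rw [hstab f ij.1 M (by omega)]
        exact hj₀min _ hlt
      · have hlt2 : ij.2 < j₁ := by
          rcases eq_or_lt_of_le hge with heq | hlt'
          · exfalso
            apply hne
            have h2 : ij.2 = j₁ := by omega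
            exact Prod.ext heq.symm h2
          · omega
        refine Ideal.mul_mem_left _ _ ?_
        rw [hstab g ij.2 M (by omega)]
        exact hj₁min _ hlt2
    have hterm : (DirectSum.decompose 𝒜 (f.val M) j₀ : A) *
        (DirectSum.decompose 𝒜 (g.val M) j₁ : A) ∈ p := by
      have heq := eq_sub_of_add_eq hsum
      show (fun ij : ℕ × ℕ => (DirectSum.decompose 𝒜 (f.val M) ij.1 : A) *
        (DirectSum.decompose 𝒜 (g.val M) ij.2 : A)) (j₀, j₁) ∈ p
      refine Eq.mpr (congrArg (fun z => z ∈ p) heq) ?_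
      exact Submodule.sub_mem _ hip hrest
    rcases hp.mem_or_mem hterm with hcase | hcase
    · exact hj₀ne hcase
    · exact hj₁ne hcase
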